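/- Let {b_t} and {α_t} be nonnegative sequences and {w_t} a sequence of vectors with ∑_{t=1}^∞ α_t b_t^p < ∞ for some p ≥ 1 and ∑_{t=1}^∞ α_t = ∞. Suppose there exists L > 0 such that for all t and τ ≥ 1, |b_{t+τ} − b_t| ≤ L(∑_{i=t}^{t+τ−1} α_i b_i + ‖∑_{i=t}^{t+τ−1} α_i w_i‖), where ∑_{t=1}^∞ α_t w_t converges. Then b_t → 0. -/
import Mathlib


open Filter Finset

/-- Lemma 1 of Orabona 2020: last-iterate convergence lemma. -/
theorem last_iterate_lemma {d : ℕ} (b α : ℕ → ℝ) (w : ℕ → EuclideanSpace ℝ (Fin d))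
    (p : ℝ) (hp : 1 ≤ p) (hb : ∀ t, 0 ≤ b t) (hα : ∀ t, 0 ≤ α t)
    (hsum : Summable fun t => α t * b t ^ p)
    (hdiv : ¬ Summable α) (L : ℝ) (hL : 0 < L)
    (hosc : ∀ t τ : ℕ, 1 ≤ τ →
      |b (t + τ) - b t| ≤
        L * ((∑ i ∈ Ico t (t + τ), α i * b i) + ‖∑ i ∈ Ico t (t + τ), α i • w i‖))
    (hconv : ∃ S, Tendsto (fun T => ∑ t ∈ range T, α t • w t) atTop (nhds S)) :
    Tendsto b atTop (nhds 0) := by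
  by_contra hcon
  rw [Metric.tendsto_atTop] at hcon
  push_neg at hcon
  obtain ⟨ε, hε, hio⟩ := hcon
  set c : ℝ := ε / 2 with hc_def
  have hc : 0 < c := by positivity
  -- b < c infinitely often
  have hsmall : ∀ N, ∃ n, N ≤ n ∧ b n < c := by
    by_contra h
    push_neg at h
    obtain ⟨N, hN⟩ := h
    apply hdiv
    rw [← summable_nat_add_iff N]
    have h2 : 0 < c ^ p := Real.rpow_pos_of_pos hc p
    have hcomp : ∀ n : ℕ, α (n + N) ≤ (c ^ p)⁻¹ * (α (n + N) * b (n + N) ^ p) := by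
      intro n
      have h1 : c ^ p ≤ b (n + N) ^ p :=
        Real.rpow_le_rpow hc.le (hN (n + N) (Nat.le_add_left N n)) (by linarith)
      have h3 : α (n + N) * c ^ p ≤ α (n + N) * b (n + N) ^ p :=
        mul_le_mul_of_nonneg_left h1 (hα (n + N))
      calc α (n + N) = (c ^ p)⁻¹ * (α (n + N) * c ^ p) := by
            field_simp
        _ ≤ (c ^ p)⁻¹ * (α (n + N) * b (n + N) ^ p) :=
            mul_le_mul_of_nonneg_left h3 (inv_nonneg.mpr h2.le)
    exact Summable.of_nonneg_of_le (fun n => hα _) hcomp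
      (((summable_nat_add_iff N).mpr hsum).mul_left _)
  -- Cauchy tail of the real series
  have hcp : 0 < c ^ p / (2 * L) := by
    have := Real.rpow_pos_of_pos hc p
    positivity
  have hS : CauchySeq (fun T => ∑ t ∈ range T, α t * b t ^ p) :=
    hsum.hasSum.tendsto_sum_nat.cauchySeq
  rw [Metric.cauchySeq_iff] at hS
  obtain ⟨T1, hT1⟩ := hS (c ^ p / (2 * L)) hcp
  -- Cauchy tail of the vector series
  obtain ⟨Sv, hSv⟩ := hconv
  have hP : CauchySeq (fun T => ∑ t ∈ range T, α t • w t) := hSv.cauchySeq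
  rw [Metric.cauchySeq_iff] at hP
  obtain ⟨T2, hT2⟩ := hP (c / (2 * L)) (by positivity)
  -- pick a large time with b t ≥ 2c
  obtain ⟨t, ht, hbt⟩ := hio (max T1 T2)
  have hbt2 : 2 * c ≤ b t := by
    rw [Real.dist_eq, sub_zero, abs_of_nonneg (hb t)] at hbt
    rw [hc_def]; linarith
  -- first time after t where b < c
  obtain ⟨n, hn, hbn⟩ := hsmall (t + 1)
  have hex : ∃ m, t + 1 ≤ m ∧ b m < c := ⟨n, hn, hbn⟩
  set t' := Nat.find hex with ht'_def
  obtain ⟨htt', hbt'small⟩ := Nat.find_spec hex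
  have htlt : t < t' := lt_of_lt_of_le (Nat.lt_succ_self t) htt'
  have hmid : ∀ j, t ≤ j → j < t' → c ≤ b j := by
    intro j hj1 hj2
    rcases eq_or_lt_of_le hj1 with rfl | hlt
    · linarith
    · by_contra hcj
      push_neg at hcj
      exact Nat.find_min hex hj2 ⟨hlt, hcj⟩
  -- bound on ∑ α b over the interval
  have h1p : 0 < c ^ (1 - p) := Real.rpow_pos_of_pos hc _
  have hid1 : c ^ (1 - p) * c ^ (p - 1) = 1 := by
    rw [← Real.rpow_add hc]
    norm_num
  have hid2 : c ^ (1 - p) * c ^ p = c := by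
    rw [← Real.rpow_add hc]
    norm_num
  have hterm : ∀ i ∈ Ico t t', α i * b i ≤ c ^ (1 - p) * (α i * b i ^ p) := by
    intro i hi
    rw [Finset.mem_Ico] at hi
    have hbi : c ≤ b i := hmid i hi.1 hi.2
    have hbpos : 0 < b i := lt_of_lt_of_le hc hbi
    have h1 : b i ≤ c ^ (1 - p) * b i ^ p := by
      have hbp : c ^ (p - 1) ≤ b i ^ (p - 1) :=
        Real.rpow_le_rpow hc.le hbi (by linarith)
      have h2 : c ^ (p - 1) * b i ≤ b i ^ (p - 1) * b i :=
        mul_le_mul_of_nonneg_right hbp (hb i)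
      have h3 : b i ^ (p - 1) * b i = b i ^ p := by
        calc b i ^ (p - 1) * b i = b i ^ (p - 1) * b i ^ (1 : ℝ) := by
              rw [Real.rpow_one]
          _ = b i ^ (p - 1 + 1) := (Real.rpow_add hbpos _ _).symm
          _ = b i ^ p := by norm_num
      have hkey : c ^ (p - 1) * b i ≤ b i ^ p := by rw [← h3]; exact h2
      have h4 : c ^ (1 - p) * (c ^ (p - 1) * b i) ≤ c ^ (1 - p) * b i ^ p :=
        mul_le_mul_of_nonneg_left hkey h1p.le
      calc b i = c ^ (1 - p) * c ^ (p - 1) * b i := by rw [hid1, one_mul]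
        _ = c ^ (1 - p) * (c ^ (p - 1) * b i) := by ring
        _ ≤ c ^ (1 - p) * b i ^ p := h4
    calc α i * b i ≤ α i * (c ^ (1 - p) * b i ^ p) :=
          mul_le_mul_of_nonneg_left h1 (hα i)
      _ = c ^ (1 - p) * (α i * b i ^ p) := by ring
  have hT1t : T1 ≤ t := le_trans (le_max_left T1 T2) ht
  have hT2t : T2 ≤ t := le_trans (le_max_right T1 T2) ht
  have htail : ∑ i ∈ Ico t t', α i * b i ^ p < c ^ p / (2 * L) := by
    have heq := Finset.sum_Ico_eq_sub (fun i => α i * b i ^ p) htlt.le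
    have hd := hT1 t' (le_trans hT1t htlt.le) t hT1t
    rw [Real.dist_eq] at hd
    have h5 := le_abs_self ((∑ i ∈ range t', α i * b i ^ p) - ∑ i ∈ range t, α i * b i ^ p)
    rw [heq]
    linarith
  have hsumb : ∑ i ∈ Ico t t', α i * b i < c / (2 * L) := by
    calc ∑ i ∈ Ico t t', α i * b i
        ≤ ∑ i ∈ Ico t t', c ^ (1 - p) * (α i * b i ^ p) := Finset.sum_le_sum hterm
      _ = c ^ (1 - p) * ∑ i ∈ Ico t t', α i * b i ^ p := by rw [Finset.mul_sum]
      _ < c ^ (1 - p) * (c ^ p / (2 * L)) := by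
          exact mul_lt_mul_of_pos_left htail h1p
      _ = c / (2 * L) := by rw [← mul_div_assoc, hid2]
  have hnorm : ‖∑ i ∈ Ico t t', α i • w i‖ < c / (2 * L) := by
    have heq := Finset.sum_Ico_eq_sub (fun i => α i • w i) htlt.le
    have hd := hT2 t' (le_trans hT2t htlt.le) t hT2t
    rw [dist_eq_norm] at hd
    rw [heq]
    exact hd
  have hoscc := hosc t (t' - t) (by omega)
  rw [Nat.add_sub_cancel' htlt.le] at hoscc
  have habs : c < |b t' - b t| := by
    have h6 : c < b t - b t' := by linarith
    calc c < b t - b t' := h6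
      _ ≤ |b t' - b t| := by rw [abs_sub_comm]; exact le_abs_self _
  have hrhs : L * ((∑ i ∈ Ico t t', α i * b i) + ‖∑ i ∈ Ico t t', α i • w i‖) < c := by
    have h7 := mul_lt_mul_of_pos_left (add_lt_add hsumb hnorm) hL
    have h8 : L * (c / (2 * L) + c / (2 * L)) = c := by
      field_simp
      ring
    linarith
  linarith
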